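/- arXiv:2108.12073 — 5 statements merged into one kernel-verified Lean document; each statement's English description precedes it below -/
import Mathlib

section
/- The discrete pressure gradient on a uniform n × n grid (n ≥ 2) is exactly rank-2 deficient: a pressure field p : {0,…,n−1}² → ℝ satisfies Gₓp(i,j) = 0 and G_yp(i,j) = 0 at every interior vertex (i,j) ∈ {1,…,n−1}² if and only if there exist real numbers a, b such that p(i,j) = a whenever i + j is even and p(i,j) = b whenever i + j is odd; in particular the kernel of the discrete gradient operator is two-dimensional. -/
/-- The finite-difference discrete pressure gradient on a uniform `n × n` grid (`n ≥ 2`)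
is exactly rank-2 deficient: a pressure field `p` has vanishing discrete gradient at
every interior vertex if and only if it is a checkerboard field, i.e. there exist
`a, b ∈ ℝ` with `p(i,j) = a` whenever `i + j` is even and `p(i,j) = b` whenever
`i + j` is odd. -/
theorem kernel_of_discrete_gradient_eq_checkerboard
    (n : ℕ) (hn : 2 ≤ n) (h : ℝ) (hh : 0 < h)
    (p : ℤ → ℤ → ℝ) :
    (∀ i j : ℤ, 1 ≤ i → i ≤ (n : ℤ) - 1 → 1 ≤ j → j ≤ (n : ℤ) - 1 →
      ((p i (j-1) + p i j) - (p (i-1) (j-1) + p (i-1) j)) / (2 * h) = 0 ∧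
      ((p (i-1) j + p i j) - (p (i-1) (j-1) + p i (j-1))) / (2 * h) = 0)
    ↔
    (∃ a b : ℝ, ∀ i j : ℤ, 0 ≤ i → i ≤ (n : ℤ) - 1 → 0 ≤ j → j ≤ (n : ℤ) - 1 →
      (Even (i + j) → p i j = a) ∧ (¬ Even (i + j) → p i j = b)) := by
  have h2h : (2 * h : ℝ) ≠ 0 := by positivity
  constructor
  · intro H
    have key : ∀ i j : ℤ, 1 ≤ i → i ≤ (n : ℤ) - 1 → 1 ≤ j → j ≤ (n : ℤ) - 1 →
        p i j = p (i-1) (j-1) ∧ p i (j-1) = p (i-1) j := by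
      intro i j hi hi' hj hj'
      obtain ⟨h1, h2⟩ := H i j hi hi' hj hj'
      rw [div_eq_zero_iff] at h1 h2
      rcases h1 with h1 | h1
      · rcases h2 with h2 | h2
        · constructor <;> linarith
        · exact absurd h2 h2h
      · exact absurd h1 h2h
    have hn1 : (1 : ℤ) ≤ (n : ℤ) - 1 := by omega
    refine ⟨p 0 0, p 0 1, ?_⟩
    -- row 0
    have row0 : ∀ m : ℕ, (m : ℤ) ≤ (n : ℤ) - 1 →
        p 0 m = if Even m then p 0 0 else p 0 1 := by
      intro m
      induction m using Nat.strong_induction_on with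
      | _ m ih =>
        intro hm
        match m with
        | 0 => simp
        | 1 => simp
        | (k+2) =>
          have hk : (k : ℤ) ≤ (n : ℤ) - 1 := by push_cast at hm ⊢; omega
          have hk2 : ((k : ℤ) + 2) ≤ (n : ℤ) - 1 := by push_cast at hm; omega
          have e1 := (key 1 ((k : ℤ) + 2) le_rfl hn1 (by omega) hk2).2
      -- p 1 (k+1) = p 0 (k+2)
          have e2 := (key 1 ((k : ℤ) + 1) le_rfl hn1 (by omega) (by omega)).1
      -- p 1 (k+1) = p 0 k
          have e : p 0 ((k : ℤ) + 2) = p 0 (k : ℤ) := by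
            have a1 : ((k : ℤ) + 2) - 1 = (k : ℤ) + 1 := by ring
            have a2 : ((k : ℤ) + 1) - 1 = (k : ℤ) := by ring
            have a3 : (1 : ℤ) - 1 = 0 := by ring
            rw [a1, a3] at e1
            rw [a2, a3] at e2
            rw [← e1, e2]
          have hcast : ((k + 2 : ℕ) : ℤ) = (k : ℤ) + 2 := by push_cast; ring
          rw [hcast, e]
          have := ih k (by omega) hk
          rw [this]
          have hpar : Even (k + 2) ↔ Even k := by
            simp [Nat.even_add]
          by_cases hek : Even k
          · rw [if_pos hek, if_pos (hpar.mpr hek)]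
          · rw [if_neg hek, if_neg (fun hx => hek (hpar.mp hx))]
    have rows : ∀ m : ℕ, (m : ℤ) ≤ (n : ℤ) - 1 → ∀ j : ℤ, 0 ≤ j → j ≤ (n : ℤ) - 1 →
        p m j = if Even ((m : ℤ) + j) then p 0 0 else p 0 1 := by
      intro m
      induction m with
      | zero =>
        intro _ j hj hj'
        lift j to ℕ using hj
        simp only [Nat.cast_zero]
        rw [row0 j hj']
        have : Even ((0 : ℤ) + (j : ℤ)) ↔ Even j := by
          simp [Int.even_coe_nat]
        by_cases hej : Even j
        · rw [if_pos hej, if_pos (this.mpr hej)]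
        · rw [if_neg hej, if_neg (fun hx => hej (this.mp hx))]
      | succ m ih =>
        intro hm j hj hj'
        have hm' : (m : ℤ) ≤ (n : ℤ) - 1 := by push_cast at hm ⊢; omega
        have hcast : ((m + 1 : ℕ) : ℤ) = (m : ℤ) + 1 := by push_cast; ring
        by_cases hj1 : 1 ≤ j
        · have e := (key ((m : ℤ) + 1) j (by omega) (by push_cast at hm ⊢; omega) hj1 hj').1
          have a1 : ((m : ℤ) + 1) - 1 = (m : ℤ) := by ring
          rw [a1] at e
          rw [hcast, e, ih hm' (j - 1) (by omega) (by omega)]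
          have hpar : Even ((m : ℤ) + (j - 1)) ↔ Even (((m : ℤ) + 1) + j) := by
            constructor
            · rintro ⟨r, hr⟩; exact ⟨r + 1, by omega⟩
            · rintro ⟨r, hr⟩; exact ⟨r - 1, by omega⟩
          by_cases he : Even (((m : ℤ) + 1) + j)
          · rw [if_pos (hpar.mpr he), if_pos he]
          · rw [if_neg (fun hx => he (hpar.mp hx)), if_neg he]
        · have hj0 : j = 0 := by omega
          subst hj0
          have e := (key ((m : ℤ) + 1) 1 (by omega) (by push_cast at hm ⊢; omega) le_rfl hn1).2
          have a1 : ((m : ℤ) + 1) - 1 = (m : ℤ) := by ring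
          have a3 : (1 : ℤ) - 1 = 0 := by ring
          rw [a1, a3] at e
          rw [hcast, e, ih hm' 1 (by omega) hn1]
          have hpar : Even ((m : ℤ) + 1) ↔ Even (((m : ℤ) + 1) + 0) := by simp
          by_cases he : Even (((m : ℤ) + 1) + 0)
          · rw [if_pos (hpar.mpr he), if_pos he]
          · rw [if_neg (fun hx => he (hpar.mp hx)), if_neg he]
    intro i j hi hi' hj hj'
    lift i to ℕ using hi
    have := rows i hi' j hj hj'
    constructor
    · intro he; rw [this]; simp [he]
    · intro he; rw [this]; simp [he]
  · rintro ⟨a, b, hp⟩ i j hi hi' hj hj'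
    have hA := hp (i-1) (j-1) (by omega) (by omega) (by omega) (by omega)
    have hB := hp i (j-1) (by omega) (by omega) (by omega) (by omega)
    have hC := hp (i-1) j (by omega) (by omega) (by omega) (by omega)
    have hD := hp i j (by omega) (by omega) (by omega) (by omega)
    have eA : Even ((i-1) + (j-1)) ↔ Even (i + j) := by
      constructor
      · rintro ⟨r, hr⟩; exact ⟨r + 1, by omega⟩
      · rintro ⟨r, hr⟩; exact ⟨r - 1, by omega⟩
    have eB : Even (i + (j-1)) ↔ ¬ Even (i + j) := by
      constructor
      · rintro ⟨r, hr⟩ ⟨s, hs⟩; omega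
      · intro hne
        rcases Int.even_or_odd (i + (j-1)) with he | ⟨r, hr⟩
        · exact he
        · exact absurd ⟨r + 1, by omega⟩ hne
    have eC : Even ((i-1) + j) ↔ ¬ Even (i + j) := by
      constructor
      · rintro ⟨r, hr⟩ ⟨s, hs⟩; omega
      · intro hne
        rcases Int.even_or_odd ((i-1) + j) with he | ⟨r, hr⟩
        · exact he
        · exact absurd ⟨r + 1, by omega⟩ hne
    by_cases he : Even (i + j)
    · have v1 : p i j = a := hD.1 he
      have v2 : p (i-1) (j-1) = a := hA.1 (eA.mpr he)
      have v3 : p i (j-1) = b := hB.2 (fun hx => (eB.mp hx) he)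
      have v4 : p (i-1) j = b := hC.2 (fun hx => (eC.mp hx) he)
      constructor <;> (rw [v1, v2, v3, v4]; ring_nf)
    · have v1 : p i j = b := hD.2 he
      have v2 : p (i-1) (j-1) = b := hA.2 (fun hx => he (eA.mp hx))
      have v3 : p i (j-1) = a := hB.1 (eB.mpr he)
      have v4 : p (i-1) j = a := hC.1 (eC.mpr he)
      constructor <;> (rw [v1, v2, v3, v4]; ring_nf)
end

section
/- The finite-volume discrete pressure gradient is the negative adjoint of the finite-volume discrete divergence on a uniform grid: for every pressure field p : {0,…,n−1}² → ℝ and all velocity fields u, v : {0,…,n}² → ℝ that vanish at every boundary vertex (i.e. u(i,j) = v(i,j) = 0 whenever i ∈ {0,n} or j ∈ {0,n}), one has Σ_{(i,j)∈{1,…,n−1}²} [Gₓp(i,j) u(i,j) + G_yp(i,j) v(i,j)] = − Σ_{(i,j)∈{0,…,n−1}²} p(i,j) D(u,v)(i,j). -/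
open Finset

private lemma fv_shift2 (F : ℤ → ℤ → ℝ) (s t a b c d : ℤ) :
    ∑ i ∈ Finset.Icc (a + s) (b + s), ∑ j ∈ Finset.Icc (c + t) (d + t), F i j
      = ∑ i ∈ Finset.Icc a b, ∑ j ∈ Finset.Icc c d, F (i + s) (j + t) := by
  rw [← Finset.map_add_right_Icc, Finset.sum_map]
  refine Finset.sum_congr rfl fun i _ => ?_
  rw [← Finset.map_add_right_Icc, Finset.sum_map]
  rfl

private lemma fv_extend_grid (n a b c d : ℤ) (ha : 0 ≤ a) (hb : b ≤ n) (hc : 0 ≤ c)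
    (hd : d ≤ n) (F : ℤ → ℤ → ℝ)
    (hF : ∀ i j : ℤ, 0 ≤ i → i ≤ n → 0 ≤ j → j ≤ n →
      (i < a ∨ b < i ∨ j < c ∨ d < j) → F i j = 0) :
    ∑ i ∈ Finset.Icc a b, ∑ j ∈ Finset.Icc c d, F i j
      = ∑ i ∈ Finset.Icc (0 : ℤ) n, ∑ j ∈ Finset.Icc (0 : ℤ) n, F i j := by
  have step1 : ∑ i ∈ Finset.Icc a b, ∑ j ∈ Finset.Icc c d, F i j
      = ∑ i ∈ Finset.Icc a b, ∑ j ∈ Finset.Icc (0 : ℤ) n, F i j := by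
    refine Finset.sum_congr rfl fun i hi => ?_
    refine Finset.sum_subset (Finset.Icc_subset_Icc hc hd) fun j hj hj' => ?_
    simp only [Finset.mem_Icc] at hi hj hj'
    exact hF i j (by omega) (by omega) hj.1 hj.2 (by omega)
  rw [step1]
  refine Finset.sum_subset (Finset.Icc_subset_Icc ha hb) fun i hi hi' => ?_
  refine Finset.sum_eq_zero fun j hj => ?_
  simp only [Finset.mem_Icc] at hi hi' hj
  exact hF i j hi.1 hi.2 hj.1 hj.2 (by omega)

private lemma fv_term_eq (n : ℕ) (c : ℝ) (q w : ℤ → ℤ → ℝ)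
    (hw : ∀ i j : ℤ, (i = 0 ∨ i = (n : ℤ) ∨ j = 0 ∨ j = (n : ℤ)) → w i j = 0)
    (s t : ℤ) (hs : s = 0 ∨ s = 1) (ht : t = 0 ∨ t = 1) :
    ∑ i ∈ Finset.Icc (0 : ℤ) ((n : ℤ) - 1), ∑ j ∈ Finset.Icc (0 : ℤ) ((n : ℤ) - 1),
      c * (q i j * w (i + s) (j + t))
    = ∑ i ∈ Finset.Icc (0 : ℤ) (n : ℤ), ∑ j ∈ Finset.Icc (0 : ℤ) (n : ℤ),
      c * (q (i - s) (j - t) * w i j) := by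
  have hshift := fv_shift2 (fun i j => c * (q (i - s) (j - t) * w i j)) s t
    0 ((n : ℤ) - 1) 0 ((n : ℤ) - 1)
  simp only [zero_add, add_sub_cancel_right] at hshift
  rw [← hshift]
  exact fv_extend_grid (n : ℤ) s ((n : ℤ) - 1 + s) t ((n : ℤ) - 1 + t)
    (by omega) (by omega) (by omega) (by omega) _
    (fun i j h0 h1 h2 h3 hout => by
      have hz : w i j = 0 := hw i j
        (by rcases hs with rfl | rfl <;> rcases ht with rfl | rfl <;> omega)
      rw [hz]; ring)

/-- On a uniform grid, the finite-volume discrete pressure gradient is the negative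
adjoint of the finite-volume discrete divergence: for every pressure field `p` on cells
and every velocity field `(u,v)` on vertices vanishing on the boundary,
`Σ (Gₓp·u + G_yp·v) over interior vertices = - Σ p·D(u,v) over cells`. -/
theorem fv_gradient_neg_adjoint_of_divergence
    (n : ℕ) (hn : 2 ≤ n) (h : ℝ) (hh : 0 < h)
    (p : ℤ → ℤ → ℝ) (u v : ℤ → ℤ → ℝ)
    (hbc : ∀ i j : ℤ, (i = 0 ∨ i = (n : ℤ) ∨ j = 0 ∨ j = (n : ℤ)) →
      u i j = 0 ∧ v i j = 0) :
    ∑ i ∈ Finset.Icc (1 : ℤ) ((n : ℤ) - 1), ∑ j ∈ Finset.Icc (1 : ℤ) ((n : ℤ) - 1),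
      ((h / 2) * ((p i (j-1) + p i j) - (p (i-1) (j-1) + p (i-1) j)) * u i j
        + (h / 2) * ((p (i-1) j + p i j) - (p (i-1) (j-1) + p i (j-1))) * v i j)
    =
    - ∑ i ∈ Finset.Icc (0 : ℤ) ((n : ℤ) - 1), ∑ j ∈ Finset.Icc (0 : ℤ) ((n : ℤ) - 1),
      p i j *
        ((h / 2) * ((u (i+1) j + u (i+1) (j+1)) - (u i j + u i (j+1)))
          + (h / 2) * ((v i (j+1) + v (i+1) (j+1)) - (v i j + v (i+1) j))) := by
  have hu : ∀ i j : ℤ, (i = 0 ∨ i = (n : ℤ) ∨ j = 0 ∨ j = (n : ℤ)) → u i j = 0 :=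
    fun i j hb => (hbc i j hb).1
  have hv : ∀ i j : ℤ, (i = 0 ∨ i = (n : ℤ) ∨ j = 0 ∨ j = (n : ℤ)) → v i j = 0 :=
    fun i j hb => (hbc i j hb).2
  -- Extend the LHS sum from interior vertices to the full vertex grid.
  have hL : ∑ i ∈ Finset.Icc (1 : ℤ) ((n : ℤ) - 1), ∑ j ∈ Finset.Icc (1 : ℤ) ((n : ℤ) - 1),
      ((h / 2) * ((p i (j-1) + p i j) - (p (i-1) (j-1) + p (i-1) j)) * u i j
        + (h / 2) * ((p (i-1) j + p i j) - (p (i-1) (j-1) + p i (j-1))) * v i j)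
      = ∑ i ∈ Finset.Icc (0 : ℤ) (n : ℤ), ∑ j ∈ Finset.Icc (0 : ℤ) (n : ℤ),
      ((h / 2) * ((p i (j-1) + p i j) - (p (i-1) (j-1) + p (i-1) j)) * u i j
        + (h / 2) * ((p (i-1) j + p i j) - (p (i-1) (j-1) + p i (j-1))) * v i j) := by
    refine fv_extend_grid (n : ℤ) 1 ((n : ℤ) - 1) 1 ((n : ℤ) - 1)
      (by omega) (by omega) (by omega) (by omega) _ ?_
    intro i j h0 h1 h2 h3 hout
    have hb : i = 0 ∨ i = (n : ℤ) ∨ j = 0 ∨ j = (n : ℤ) := by omega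
    rw [hu i j hb, hv i j hb]; ring
  rw [hL]
  -- Eight shifted-sum identities.
  have E1 := fv_term_eq n (h / 2) p u hu 1 0 (Or.inr rfl) (Or.inl rfl)
  have E2 := fv_term_eq n (h / 2) p u hu 1 1 (Or.inr rfl) (Or.inr rfl)
  have E3 := fv_term_eq n (h / 2) p u hu 0 0 (Or.inl rfl) (Or.inl rfl)
  have E4 := fv_term_eq n (h / 2) p u hu 0 1 (Or.inl rfl) (Or.inr rfl)
  have E5 := fv_term_eq n (h / 2) p v hv 0 1 (Or.inl rfl) (Or.inr rfl)
  have E6 := fv_term_eq n (h / 2) p v hv 1 1 (Or.inr rfl) (Or.inr rfl)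
  have E7 := fv_term_eq n (h / 2) p v hv 0 0 (Or.inl rfl) (Or.inl rfl)
  have E8 := fv_term_eq n (h / 2) p v hv 1 0 (Or.inr rfl) (Or.inl rfl)
  simp only [add_zero, sub_zero, zero_add, zero_sub] at E1 E2 E3 E4 E5 E6 E7 E8
  -- Expand the divergence sum into eight shifted sums.
  have hR : ∑ i ∈ Finset.Icc (0 : ℤ) ((n : ℤ) - 1), ∑ j ∈ Finset.Icc (0 : ℤ) ((n : ℤ) - 1),
      p i j *
        ((h / 2) * ((u (i+1) j + u (i+1) (j+1)) - (u i j + u i (j+1)))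
          + (h / 2) * ((v i (j+1) + v (i+1) (j+1)) - (v i j + v (i+1) j)))
      = ∑ i ∈ Finset.Icc (0 : ℤ) ((n : ℤ) - 1), ∑ j ∈ Finset.Icc (0 : ℤ) ((n : ℤ) - 1),
        ((h / 2) * (p i j * u (i+1) j) + (h / 2) * (p i j * u (i+1) (j+1))
          - (h / 2) * (p i j * u i j) - (h / 2) * (p i j * u i (j+1))
          + (h / 2) * (p i j * v i (j+1)) + (h / 2) * (p i j * v (i+1) (j+1))
          - (h / 2) * (p i j * v i j) - (h / 2) * (p i j * v (i+1) j)) := by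
    refine Finset.sum_congr rfl fun i _ => Finset.sum_congr rfl fun j _ => by ring
  rw [hR]
  -- Split the extended LHS sum into the matching eight sums.
  have hsplit : ∑ i ∈ Finset.Icc (0 : ℤ) (n : ℤ), ∑ j ∈ Finset.Icc (0 : ℤ) (n : ℤ),
      ((h / 2) * ((p i (j-1) + p i j) - (p (i-1) (j-1) + p (i-1) j)) * u i j
        + (h / 2) * ((p (i-1) j + p i j) - (p (i-1) (j-1) + p i (j-1))) * v i j)
      = ∑ i ∈ Finset.Icc (0 : ℤ) (n : ℤ), ∑ j ∈ Finset.Icc (0 : ℤ) (n : ℤ),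
        ((h / 2) * (p i j * u i j) + (h / 2) * (p i (j-1) * u i j)
          - (h / 2) * (p (i-1) j * u i j) - (h / 2) * (p (i-1) (j-1) * u i j)
          + (h / 2) * (p i j * v i j) + (h / 2) * (p (i-1) j * v i j)
          - (h / 2) * (p i (j-1) * v i j) - (h / 2) * (p (i-1) (j-1) * v i j)) := by
    refine Finset.sum_congr rfl fun i _ => Finset.sum_congr rfl fun j _ => by ring
  rw [hsplit]
  simp only [Finset.sum_add_distrib, Finset.sum_sub_distrib]
  rw [E1, E2, E3, E4, E5, E6, E7, E8]
  ring
end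

section
/- The trapezoidal-rule discretization of the divergence theorem over a closed polygonal curve is exact for affine vector fields: let x₁, …, xₙ ∈ ℝ² with xₙ₊₁ := x₁, let R : ℝ² → ℝ² be the clockwise 90° rotation R(a,b) = (b,−a), and let 𝐮(x) = A x + c be an affine vector field with A a 2×2 real matrix and c ∈ ℝ². Then Σ_{i=1}^{n} ((𝐮(xᵢ) + 𝐮(xᵢ₊₁))/2) · R(xᵢ₊₁ − xᵢ) = tr(A) · (1/2) Σ_{i=1}^{n} det[xᵢ, xᵢ₊₁], where det[x, y] denotes the determinant of the 2×2 matrix with columns x and y (so the last sum is the signed shoelace area enclosed by the polygon), and tr(A) = ∇·𝐮. -/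
open Finset Matrix

/-- The trapezoidal-rule discretization of the divergence theorem over a closed
polygonal curve is exact for affine vector fields: with vertices `x 0, …, x n`
(`x n = x 0`), `R` the clockwise 90° rotation `R(a,b) = (b,-a)`, and `U(y) = A y + c`
affine, `Σᵢ ((U(xᵢ) + U(xᵢ₊₁))/2) ⬝ R(xᵢ₊₁ − xᵢ) = tr A · (1/2) Σᵢ det[xᵢ, xᵢ₊₁]`,
the last sum being the signed shoelace area of the polygon. -/
theorem trapezoid_divergence_exact_for_affine
    (n : ℕ) (x : ℕ → Fin 2 → ℝ) (hclosed : x n = x 0)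
    (A : Matrix (Fin 2) (Fin 2) ℝ) (c : Fin 2 → ℝ)
    (U : (Fin 2 → ℝ) → (Fin 2 → ℝ)) (hU : ∀ y, U y = A.mulVec y + c)
    (R : (Fin 2 → ℝ) → (Fin 2 → ℝ)) (hR : ∀ y, R y = ![y 1, -(y 0)]) :
    ∑ i ∈ Finset.range n,
      (((1 : ℝ) / 2) • (U (x i) + U (x (i + 1)))) ⬝ᵥ R (x (i + 1) - x i)
    =
    A.trace * ((1 / 2) * ∑ i ∈ Finset.range n,
      (x i 0 * x (i + 1) 1 - x i 1 * x (i + 1) 0)) := by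
  set F : (Fin 2 → ℝ) → ℝ := fun y =>
    (1/2) * ((A 0 0 * y 0 + A 0 1 * y 1) * y 1 - (A 1 0 * y 0 + A 1 1 * y 1) * y 0)
      + (c 0 * y 1 - c 1 * y 0) with hF
  have key : ∀ i : ℕ,
      (((1 : ℝ) / 2) • (U (x i) + U (x (i + 1)))) ⬝ᵥ R (x (i + 1) - x i)
      = A.trace * ((1/2) * (x i 0 * x (i + 1) 1 - x i 1 * x (i + 1) 0))
        + (F (x (i + 1)) - F (x i)) := by
    intro i
    simp only [hU, hR, hF, dotProduct, Fin.sum_univ_two, Matrix.mulVec,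
      Matrix.trace, Matrix.diag, Pi.add_apply, Pi.sub_apply, Pi.smul_apply,
      smul_eq_mul, Matrix.cons_val_zero, Matrix.cons_val_one, Matrix.head_cons,
      Fin.sum_univ_two]
    ring
  rw [Finset.sum_congr rfl fun i _ => key i, Finset.sum_add_distrib,
    Finset.sum_range_sub (fun i => F (x i)), hclosed, sub_self, add_zero,
    ← Finset.mul_sum, ← Finset.mul_sum]
end

section
/- Truncation-error bound for the nonuniform central second difference: let f : ℝ → ℝ be three times differentiable on [x−d_L, x+d_R] with |f'''(ξ)| ≤ M for all ξ in this interval, where d_R, d_L > 0. Then | (2/(d_R+d_L)) · [ (f(x+d_R) − f(x))/d_R − (f(x) − f(x−d_L))/d_L ] − f''(x) | ≤ M (d_R² + d_L²) / (3(d_R + d_L)). -/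
open Set

lemma taylor2_bound (g g' g'' g''' : ℝ → ℝ) (a b M : ℝ) (hab : a ≤ b)
    (hg : ∀ y ∈ Icc a b, HasDerivAt g (g' y) y)
    (hg' : ∀ y ∈ Icc a b, HasDerivAt g' (g'' y) y)
    (hg'' : ∀ y ∈ Icc a b, HasDerivAt g'' (g''' y) y)
    (hM : ∀ y ∈ Icc a b, |g''' y| ≤ M) :
    |g b - g a - g' a * (b - a) - g'' a * (b - a)^2 / 2| ≤ M * (b - a)^3 / 6 := by
  have step1 : ∀ t ∈ Icc a b, |g'' t - g'' a| ≤ M * (t - a) := by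
    have := norm_image_sub_le_of_norm_deriv_le_segment'
      (f := g'') (f' := g''') (a := a) (b := b)
      (fun y hy => (hg'' y hy).hasDerivWithinAt)
      (fun y hy => hM y (Ico_subset_Icc_self hy))
    intro t ht
    simpa [Real.norm_eq_abs] using this t ht
  have h1deriv : ∀ t ∈ Icc a b,
      HasDerivAt (fun t => g' t - g' a - g'' a * (t - a)) (g'' t - g'' a) t := by
    intro t ht
    have hd := ((hg' t ht).sub_const (g' a)).sub
      (((hasDerivAt_id t).sub_const a).const_mul (g'' a))
    exact hd.congr_deriv (by ring)
  have step2 : ∀ t ∈ Icc a b,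
      |g' t - g' a - g'' a * (t - a)| ≤ M * (t - a)^2 / 2 := by
    have hB : ∀ t : ℝ, HasDerivAt (fun t => M * (t - a)^2 / 2) (M * (t - a)) t := by
      intro t
      have hd := ((((hasDerivAt_id t).sub_const a).pow 2).const_mul M).div_const 2
      exact hd.congr_deriv (by norm_num; ring)
    intro t ht
    have := image_norm_le_of_norm_deriv_right_le_deriv_boundary
      (f := fun t => g' t - g' a - g'' a * (t - a))
      (f' := fun t => g'' t - g'' a) (a := a) (b := b)
      (B := fun t => M * (t - a)^2 / 2) (B' := fun t => M * (t - a))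
      (fun y hy => ((h1deriv y hy).continuousAt).continuousWithinAt)
      (fun y hy => (h1deriv y (Ico_subset_Icc_self hy)).hasDerivWithinAt)
      (by simp) hB
      (fun y hy => by simpa [Real.norm_eq_abs] using step1 y (Ico_subset_Icc_self hy))
      ht
    simpa [Real.norm_eq_abs] using this
  have h0deriv : ∀ t ∈ Icc a b,
      HasDerivAt (fun t => g t - g a - g' a * (t - a) - g'' a * (t - a)^2 / 2)
        (g' t - g' a - g'' a * (t - a)) t := by
    intro t ht
    have hd := (((hg t ht).sub_const (g a)).sub
      (((hasDerivAt_id t).sub_const a).const_mul (g' a))).sub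
      (((((hasDerivAt_id t).sub_const a).pow 2).const_mul (g'' a)).div_const 2)
    exact hd.congr_deriv (by norm_num; ring)
  have hB0 : ∀ t : ℝ, HasDerivAt (fun t => M * (t - a)^3 / 6) (M * (t - a)^2 / 2) t := by
    intro t
    have hd := ((((hasDerivAt_id t).sub_const a).pow 3).const_mul M).div_const 6
    exact hd.congr_deriv (by norm_num; ring)
  have step3 := image_norm_le_of_norm_deriv_right_le_deriv_boundary
    (f := fun t => g t - g a - g' a * (t - a) - g'' a * (t - a)^2 / 2)
    (f' := fun t => g' t - g' a - g'' a * (t - a)) (a := a) (b := b)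
    (B := fun t => M * (t - a)^3 / 6) (B' := fun t => M * (t - a)^2 / 2)
    (fun y hy => ((h0deriv y hy).continuousAt).continuousWithinAt)
    (fun y hy => (h0deriv y (Ico_subset_Icc_self hy)).hasDerivWithinAt)
    (by simp) hB0
    (fun y hy => by simpa [Real.norm_eq_abs] using step2 y (Ico_subset_Icc_self hy))
    (right_mem_Icc.2 hab)
  simpa [Real.norm_eq_abs] using step3

/-- Truncation-error bound for the nonuniform central second difference: if `f` is
three times differentiable on `[x - d_L, x + d_R]` with `|f'''| ≤ M` there, then
the nonuniform central second difference approximates `f''(x)` with error at most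
`M (d_R² + d_L²) / (3 (d_R + d_L))`. -/
theorem nonuniform_second_difference_truncation_error
    (f f' f'' f''' : ℝ → ℝ) (x dR dL M : ℝ)
    (hdR : 0 < dR) (hdL : 0 < dL)
    (hf : ∀ y ∈ Set.Icc (x - dL) (x + dR), HasDerivAt f (f' y) y)
    (hf' : ∀ y ∈ Set.Icc (x - dL) (x + dR), HasDerivAt f' (f'' y) y)
    (hf'' : ∀ y ∈ Set.Icc (x - dL) (x + dR), HasDerivAt f'' (f''' y) y)
    (hM : ∀ y ∈ Set.Icc (x - dL) (x + dR), |f''' y| ≤ M) :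
    |(2 / (dR + dL)) * ((f (x + dR) - f x) / dR - (f x - f (x - dL)) / dL) - f'' x|
      ≤ M * (dR^2 + dL^2) / (3 * (dR + dL)) := by
  have hsubR : Icc x (x + dR) ⊆ Icc (x - dL) (x + dR) := by
    apply Icc_subset_Icc_left; linarith
  have hR : |f (x + dR) - f x - f' x * dR - f'' x * dR^2 / 2| ≤ M * dR^3 / 6 := by
    have := taylor2_bound f f' f'' f''' x (x + dR) M (by linarith)
      (fun y hy => hf y (hsubR hy)) (fun y hy => hf' y (hsubR hy))
      (fun y hy => hf'' y (hsubR hy)) (fun y hy => hM y (hsubR hy))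
    simpa using this
  -- reflected functions for the left side
  have hmem : ∀ t ∈ Icc x (x + dL), 2 * x - t ∈ Icc (x - dL) (x + dR) := by
    intro t ht
    obtain ⟨h1, h2⟩ := ht
    constructor <;> [linarith; linarith]
  have hinner : ∀ t : ℝ, HasDerivAt (fun y : ℝ => 2 * x - y) (-1) t := by
    intro t
    simpa using (hasDerivAt_id t).const_sub (2 * x)
  have hg : ∀ t ∈ Icc x (x + dL),
      HasDerivAt (fun t => f (2 * x - t)) (-(f' (2 * x - t))) t := by
    intro t ht
    have := (hf _ (hmem t ht)).comp t (hinner t)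
    exact this.congr_deriv (by ring)
  have hg' : ∀ t ∈ Icc x (x + dL),
      HasDerivAt (fun t => -(f' (2 * x - t))) (f'' (2 * x - t)) t := by
    intro t ht
    have := ((hf' _ (hmem t ht)).comp t (hinner t)).neg
    exact this.congr_deriv (by ring)
  have hg'' : ∀ t ∈ Icc x (x + dL),
      HasDerivAt (fun t => f'' (2 * x - t)) (-(f''' (2 * x - t))) t := by
    intro t ht
    have := (hf'' _ (hmem t ht)).comp t (hinner t)
    exact this.congr_deriv (by ring)
  have hL : |f (x - dL) - f x + f' x * dL - f'' x * dL^2 / 2| ≤ M * dL^3 / 6 := by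
    have := taylor2_bound (fun t => f (2 * x - t)) (fun t => -(f' (2 * x - t)))
      (fun t => f'' (2 * x - t)) (fun t => -(f''' (2 * x - t))) x (x + dL) M
      (by linarith) hg hg' hg''
      (fun y hy => by simpa using hM _ (hmem y hy))
    have h2 : 2 * x - (x + dL) = x - dL := by ring
    have h3 : 2 * x - x = x := by ring
    simp only [h2, h3, show x + dL - x = dL from by ring] at this
    calc |f (x - dL) - f x + f' x * dL - f'' x * dL^2 / 2|
        = |f (x - dL) - f x - -(f' x) * dL - f'' x * dL^2 / 2| := by ring_nf
      _ ≤ M * dL^3 / 6 := this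
  set ER := f (x + dR) - f x - f' x * dR - f'' x * dR^2 / 2 with hER
  set EL := f (x - dL) - f x + f' x * dL - f'' x * dL^2 / 2 with hEL
  have hd : dR + dL ≠ 0 := by positivity
  have key : (2 / (dR + dL)) * ((f (x + dR) - f x) / dR - (f x - f (x - dL)) / dL) - f'' x
      = 2 / (dR + dL) * (ER / dR + EL / dL) := by
    rw [hER, hEL]; field_simp; ring
  rw [key]
  calc |2 / (dR + dL) * (ER / dR + EL / dL)|
      = 2 / (dR + dL) * |ER / dR + EL / dL| := by
        rw [abs_mul, abs_of_pos (by positivity)]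
    _ ≤ 2 / (dR + dL) * (|ER| / dR + |EL| / dL) := by
        gcongr
        refine (abs_add_le _ _).trans ?_
        rw [abs_div, abs_div, abs_of_pos hdR, abs_of_pos hdL]
    _ ≤ 2 / (dR + dL) * ((M * dR^3 / 6) / dR + (M * dL^3 / 6) / dL) := by gcongr
    _ = M * (dR^2 + dL^2) / (3 * (dR + dL)) := by field_simp; ring
end

section
/- Third-order local truncation error of the midpoint (RK2) backward characteristic tracing: let g : ℝ² × ℝ → ℝ² be twice continuously differentiable with g and all its partial derivatives up to order 2 bounded on ℝ² × ℝ. Fix x ∈ ℝ², t ∈ ℝ, and for Δt ∈ (0,1] let X : ℝ → ℝ² denote the solution of the ODE X'(s) = g(X(s), s) with terminal condition X(t + Δt) = x, and define the discrete departure point x_d = x − Δt · g( x − (Δt/2) g(x, t+Δt), t + Δt/2 ). Then there exists a constant C, depending only on the bounds on g and its derivatives (and not on x, t, or Δt), such that |X(t) − x_d| ≤ C Δt³ for all Δt ∈ (0,1]. -/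
set_option maxHeartbeats 1000000


/-- Third-order local truncation error of the midpoint (RK2) backward characteristic
tracing: if `g : ℝ² × ℝ → ℝ²` is `C²` with `g` and all its derivatives up to order 2
bounded, then there is a constant `C` (independent of `x`, `t`, `Δt`) such that for
every solution `X` of `X'(s) = g(X(s), s)` with terminal condition `X(t + Δt) = x` and
every `Δt ∈ (0, 1]`, the discrete departure point
`x_d = x - Δt · g(x - (Δt/2) g(x, t+Δt), t + Δt/2)` satisfies `‖X t - x_d‖ ≤ C Δt³`. -/
theorem rk2_backward_tracing_third_order
    (g : (ℝ × ℝ) × ℝ → ℝ × ℝ) (hg : ContDiff ℝ 2 g)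
    (B : ℝ) (hB : ∀ k : ℕ, k ≤ 2 → ∀ z, ‖iteratedFDeriv ℝ k g z‖ ≤ B) :
    ∃ C : ℝ, ∀ (x : ℝ × ℝ) (t Δt : ℝ), Δt ∈ Set.Ioc (0 : ℝ) 1 →
      ∀ X : ℝ → ℝ × ℝ,
        (∀ s : ℝ, HasDerivAt X (g (X s, s)) s) →
        X (t + Δt) = x →
        ‖X t - (x - Δt • g (x - (Δt / 2) • g (x, t + Δt), t + Δt / 2))‖
          ≤ C * Δt^3 := by
  classical
  have hB0 : 0 ≤ B := le_trans (norm_nonneg _) (hB 0 (by norm_num) ((0, 0), 0))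
  set M : ℝ := max B 1 with hM
  have hM1 : (1 : ℝ) ≤ M := le_max_right _ _
  have hM0 : (0 : ℝ) ≤ M := by linarith
  have hBM : B ≤ M := le_max_left _ _
  have hgd : Differentiable ℝ g := hg.differentiable (by norm_num)
  set G : ((ℝ × ℝ) × ℝ) → ((ℝ × ℝ) × ℝ) →L[ℝ] (ℝ × ℝ) := fderiv ℝ g with hGdef
  -- bounds on g and its derivatives
  have hg_bd : ∀ z, ‖g z‖ ≤ B := by
    intro z
    have := hB 0 (by norm_num) z
    rwa [norm_iteratedFDeriv_zero] at this
  have hG_bd : ∀ z, ‖G z‖ ≤ B := by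
    intro z
    have := hB 1 (by norm_num) z
    calc ‖G z‖ = ‖iteratedFDeriv ℝ 0 (fderiv ℝ g) z‖ := (norm_iteratedFDeriv_zero).symm
      _ = ‖iteratedFDeriv ℝ 1 g z‖ := norm_iteratedFDeriv_fderiv
      _ ≤ B := this
  have hG_diff : Differentiable ℝ G := by
    have : ContDiff ℝ 1 (fderiv ℝ g) := hg.fderiv_right (m := 1) (by norm_num)
    exact this.differentiable (by norm_num)
  have hGG_bd : ∀ z, ‖fderiv ℝ G z‖ ≤ B := by
    intro z
    have := hB 2 (le_refl 2) z
    calc ‖fderiv ℝ G z‖ = ‖iteratedFDeriv ℝ 0 (fderiv ℝ G) z‖ := (norm_iteratedFDeriv_zero (f := fderiv ℝ G) (x := z)).symm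
      _ = ‖iteratedFDeriv ℝ 1 G z‖ := norm_iteratedFDeriv_fderiv
      _ = ‖iteratedFDeriv ℝ 1 (fderiv ℝ g) z‖ := rfl
      _ = ‖iteratedFDeriv ℝ 2 g z‖ := norm_iteratedFDeriv_fderiv
      _ ≤ B := this
  -- Lipschitz estimates
  have hg_lip : ∀ a b, ‖g a - g b‖ ≤ B * ‖a - b‖ := fun a b =>
    convex_univ.norm_image_sub_le_of_norm_fderiv_le (fun w _ => hgd w)
      (fun w _ => hG_bd w) (Set.mem_univ b) (Set.mem_univ a)
  have hG_lip : ∀ a b, ‖G a - G b‖ ≤ B * ‖a - b‖ := fun a b =>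
    convex_univ.norm_image_sub_le_of_norm_fderiv_le (fun w _ => hG_diff w)
      (fun w _ => hGG_bd w) (Set.mem_univ b) (Set.mem_univ a)
  -- second-order Taylor estimate for g
  have htaylor : ∀ z v, ‖g (z + v) - g z - G z v‖ ≤ B * ‖v‖ * ‖v‖ := by
    intro z v
    have hbound : ∀ w ∈ segment ℝ z (z + v), ‖fderiv ℝ g w - G z‖ ≤ B * ‖v‖ := by
      intro w hw
      rcases hw with ⟨a, b, ha, hb, hab, hw⟩
      have hwz : w - z = b • v := by
        rw [← hw]; rw [smul_add]
        have : a • z + (b • z + b • v) - z = (a + b) • z - z + b • v := by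
          rw [add_smul]; abel
        rw [this, hab, one_smul]; abel
      calc ‖fderiv ℝ g w - G z‖ ≤ B * ‖w - z‖ := hG_lip w z
        _ = B * (b * ‖v‖) := by rw [hwz, norm_smul, Real.norm_eq_abs, abs_of_nonneg hb]
        _ ≤ B * (1 * ‖v‖) := by
            apply mul_le_mul_of_nonneg_left _ hB0
            apply mul_le_mul_of_nonneg_right _ (norm_nonneg v)
            linarith
        _ = B * ‖v‖ := by ring
    have := (convex_segment z (z + v)).norm_image_sub_le_of_norm_fderiv_le'
      (φ := G z) (fun w _ => hgd w) hbound (left_mem_segment ℝ z (z + v))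
      (right_mem_segment ℝ z (z + v))
    simpa [add_sub_cancel_left] using this
  -- the constant
  refine ⟨3 * B * M ^ 2, ?_⟩
  intro x t Δt hΔt X hX hXτ
  obtain ⟨hΔt0, hΔt1⟩ := hΔt
  set τ : ℝ := t + Δt with hτdef
  have htτ : t ≤ τ := by simp [hτdef]; linarith
  set Y : ℝ → (ℝ × ℝ) × ℝ := fun s => (X s, s) with hYdef
  have hYτ : Y τ = (x, τ) := by simp [hYdef, hXτ]
  set z : (ℝ × ℝ) × ℝ := (x, τ) with hzdef
  set c₁ : ℝ × ℝ := g z with hc₁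
  set c₂ : ℝ × ℝ := G z (c₁, 1) with hc₂
  set W : ℝ → ℝ × ℝ := fun s => G (Y s) (g (Y s), 1) with hWdef
  have hWτ : W τ = c₂ := by simp only [hWdef, hYτ, hc₂, hc₁]
  -- derivatives
  have hY : ∀ s, HasDerivAt Y (g (Y s), 1) s := fun s =>
    (hX s).prodMk (hasDerivAt_id s)
  have hgY : ∀ s, HasDerivAt (fun u => g (Y u)) (W s) s := fun s =>
    (hgd (Y s)).hasFDerivAt.comp_hasDerivAt s (hY s)
  set R' : ℝ → ℝ × ℝ := fun s => g (Y s) - c₁ - (s - τ) • c₂ with hR'def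
  set R : ℝ → ℝ × ℝ := fun s => X s - X τ - (s - τ) • c₁ - ((s - τ) ^ 2 / 2) • c₂
    with hRdef
  have hR'd : ∀ s, HasDerivAt R' (W s - c₂) s := by
    intro s
    have h1 : HasDerivAt (fun u => (u - τ) • c₂) ((1 : ℝ) • c₂) s :=
      ((hasDerivAt_id s).sub_const τ).smul_const c₂
    have h2 := ((hgY s).sub_const c₁).sub h1
    rw [one_smul] at h2
    exact h2
  have hRd : ∀ s, HasDerivAt R (R' s) s := by
    intro s
    have h1 : HasDerivAt (fun u => (u - τ) • c₁) ((1 : ℝ) • c₁) s :=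
      ((hasDerivAt_id s).sub_const τ).smul_const c₁
    have h2 : HasDerivAt (fun u => ((u - τ) ^ 2 / 2) • c₂)
        ((2 * (s - τ) ^ 1 * 1 / 2) • c₂) s :=
      ((((hasDerivAt_id s).sub_const τ).pow 2).div_const 2).smul_const c₂
    have h3 := (((hX s).sub_const (X τ)).sub h1).sub h2
    have he : g (X s, s) - (1 : ℝ) • c₁ - (2 * (s - τ) ^ 1 * 1 / 2) • c₂ = R' s := by
      rw [hR'def]
      have : (2 * (s - τ) ^ 1 * 1 / 2 : ℝ) = s - τ := by ring
      rw [this, one_smul]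
    rwa [he] at h3
  have hRτ : R τ = 0 := by simp [hRdef]
  have hR'τ : R' τ = 0 := by
    simp [hR'def, hYτ, hc₁]
  -- Lipschitz bound on Y over [t, τ]
  have hprod_norm : ∀ p : (ℝ × ℝ) × ℝ, ‖p‖ = max ‖p.1‖ ‖p.2‖ := fun p => Prod.norm_def p
  have hsτbd : ∀ s ∈ Set.Icc t τ, ‖s - τ‖ ≤ Δt := by
    intro s hs
    have h2' : τ = t + Δt := hτdef
    rw [Real.norm_eq_abs, abs_sub_le_iff]
    exact ⟨by linarith [hs.1, hs.2], by linarith [hs.1, hs.2]⟩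
  have hXlip : ∀ s ∈ Set.Icc t τ, ‖X s - X τ‖ ≤ B * ‖s - τ‖ := by
    intro s hs
    exact (convex_Icc t τ).norm_image_sub_le_of_norm_hasDerivWithin_le
      (f' := fun u => g (Y u)) (fun u _ => (hX u).hasDerivWithinAt)
      (fun u _ => hg_bd (Y u)) (Set.right_mem_Icc.2 htτ) hs
  have hYlip : ∀ s ∈ Set.Icc t τ, ‖Y s - Y τ‖ ≤ M * Δt := by
    intro s hs
    have hsτ : ‖s - τ‖ ≤ Δt := hsτbd s hs
    have hY' : Y s - Y τ = (X s - X τ, s - τ) := by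
      simp [hYdef, Prod.mk_sub_mk]
    rw [hY', hprod_norm]
    apply max_le
    · calc ‖X s - X τ‖ ≤ B * ‖s - τ‖ := hXlip s hs
        _ ≤ M * Δt := by
            apply mul_le_mul hBM hsτ (norm_nonneg _) hM0
    · calc ‖s - τ‖ ≤ Δt := hsτ
        _ = 1 * Δt := (one_mul _).symm
        _ ≤ M * Δt := by nlinarith
  -- bound on W s - c₂
  have hW : ∀ s ∈ Set.Icc t τ, ‖W s - c₂‖ ≤ (2 * B * M ^ 2) * Δt := by
    intro s hs
    have hYs := hYlip s hs
    have hkey : W s - c₂ = (G (Y s) - G (Y τ)) (g (Y s), 1)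
        + (G (Y τ)) (g (Y s) - g (Y τ), 0) := by
      rw [← hWτ, hWdef]
      simp only [ContinuousLinearMap.sub_apply]
      have : ((g (Y s) - g (Y τ), (0 : ℝ)) : (ℝ × ℝ) × ℝ)
          = (g (Y s), (1 : ℝ)) - (g (Y τ), (1 : ℝ)) := by
        simp [Prod.ext_iff]
      rw [this, map_sub]
      abel
    have hn1 : ‖(g (Y s), (1 : ℝ))‖ ≤ M := by
      rw [hprod_norm]
      apply max_le
      · exact le_trans (hg_bd _) hBM
      · simpa using hM1
    have hb1 : ‖(G (Y s) - G (Y τ)) (g (Y s), 1)‖ ≤ (B * (M * Δt)) * M := by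
      calc ‖(G (Y s) - G (Y τ)) (g (Y s), 1)‖
          ≤ ‖G (Y s) - G (Y τ)‖ * ‖((g (Y s), 1) : (ℝ × ℝ) × ℝ)‖ :=
            ContinuousLinearMap.le_opNorm _ _
        _ ≤ (B * (M * Δt)) * M := by
            apply mul_le_mul _ hn1 (norm_nonneg _) (by positivity)
            calc ‖G (Y s) - G (Y τ)‖ ≤ B * ‖Y s - Y τ‖ := hG_lip _ _
              _ ≤ B * (M * Δt) := mul_le_mul_of_nonneg_left hYs hB0
    have hb2 : ‖(G (Y τ)) (g (Y s) - g (Y τ), 0)‖ ≤ B * (B * (M * Δt)) := by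
      calc ‖(G (Y τ)) (g (Y s) - g (Y τ), 0)‖
          ≤ ‖G (Y τ)‖ * ‖((g (Y s) - g (Y τ), 0) : (ℝ × ℝ) × ℝ)‖ :=
            ContinuousLinearMap.le_opNorm _ _
        _ ≤ B * (B * (M * Δt)) := by
            apply mul_le_mul (hG_bd _) _ (norm_nonneg _) hB0
            have he : ‖((g (Y s) - g (Y τ), 0) : (ℝ × ℝ) × ℝ)‖ = ‖g (Y s) - g (Y τ)‖ := by
              rw [hprod_norm]; simp [norm_nonneg]
            rw [he]
            calc ‖g (Y s) - g (Y τ)‖ ≤ B * ‖Y s - Y τ‖ := hg_lip _ _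
              _ ≤ B * (M * Δt) := mul_le_mul_of_nonneg_left hYs hB0
    calc ‖W s - c₂‖ ≤ ‖(G (Y s) - G (Y τ)) (g (Y s), 1)‖
          + ‖(G (Y τ)) (g (Y s) - g (Y τ), 0)‖ := by rw [hkey]; exact norm_add_le _ _
      _ ≤ (B * (M * Δt)) * M + B * (B * (M * Δt)) := add_le_add hb1 hb2
      _ ≤ (2 * B * M ^ 2) * Δt := by nlinarith [mul_nonneg hB0 (mul_nonneg hM0 hΔt0.le)]
  -- first mean value estimate : bound on R'
  have hR'bd : ∀ s ∈ Set.Icc t τ, ‖R' s‖ ≤ (2 * B * M ^ 2) * Δt * Δt := by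
    intro s hs
    have := (convex_Icc t τ).norm_image_sub_le_of_norm_hasDerivWithin_le
      (f := R') (f' := fun u => W u - c₂) (C := (2 * B * M ^ 2) * Δt)
      (fun u _ => (hR'd u).hasDerivWithinAt) (fun u hu => hW u hu)
      (Set.right_mem_Icc.2 htτ) hs
    rw [hR'τ, sub_zero] at this
    have hsτ : ‖s - τ‖ ≤ Δt := hsτbd s hs
    calc ‖R' s‖ ≤ (2 * B * M ^ 2) * Δt * ‖s - τ‖ := this
      _ ≤ (2 * B * M ^ 2) * Δt * Δt := by
          apply mul_le_mul_of_nonneg_left hsτ (by positivity)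
  -- second mean value estimate : bound on R t
  have hRbd : ‖R t‖ ≤ (2 * B * M ^ 2) * Δt ^ 3 := by
    have := (convex_Icc t τ).norm_image_sub_le_of_norm_hasDerivWithin_le
      (f := R) (f' := R') (C := (2 * B * M ^ 2) * Δt * Δt)
      (fun u _ => (hRd u).hasDerivWithinAt) hR'bd
      (Set.right_mem_Icc.2 htτ) (Set.left_mem_Icc.2 htτ)
    rw [hRτ, sub_zero] at this
    have htn : ‖t - τ‖ = Δt := by
      rw [hτdef, Real.norm_eq_abs]
      rw [show t - (t + Δt) = -Δt by ring, abs_neg, abs_of_pos hΔt0]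
    calc ‖R t‖ ≤ (2 * B * M ^ 2) * Δt * Δt * ‖t - τ‖ := this
      _ = (2 * B * M ^ 2) * Δt ^ 3 := by rw [htn]; ring
  -- assemble
  set v : (ℝ × ℝ) × ℝ := (-(Δt / 2) • c₁, -(Δt / 2)) with hvdef
  have hv : v = (-(Δt / 2)) • ((c₁, 1) : (ℝ × ℝ) × ℝ) := by
    rw [hvdef]
    simp [Prod.smul_def, smul_eq_mul]
  have hGzv : G z v = (-(Δt / 2)) • c₂ := by
    rw [hv, map_smul, hc₂]
  have hzv : ((x - (Δt / 2) • g (x, τ), t + Δt / 2) : (ℝ × ℝ) × ℝ) = z + v := by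
    rw [hzdef, hvdef]
    have : g (x, τ) = c₁ := by rw [hc₁, hzdef]
    rw [this]
    simp [Prod.ext_iff, hτdef, sub_eq_add_neg]
    ring
  have hdec : X t - (x - Δt • g (z + v))
      = R t + Δt • (g (z + v) - g z - G z v) := by
    rw [hGzv]
    have ht1 : t - τ = -Δt := by rw [hτdef]; ring
    have hR_t : R t = X t - x + Δt • c₁ - (Δt ^ 2 / 2) • c₂ := by
      rw [hRdef]
      simp only
      rw [hXτ, ht1]
      module
    rw [hR_t, ← hc₁]
    module
  have hvnorm : ‖v‖ ≤ M * Δt := by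
    rw [hv, norm_smul, Real.norm_eq_abs, abs_neg, abs_of_pos (by linarith : (0:ℝ) < Δt / 2)]
    have hn1 : ‖((c₁, 1) : (ℝ × ℝ) × ℝ)‖ ≤ M := by
      rw [hprod_norm]
      apply max_le
      · exact le_trans (hc₁ ▸ hg_bd z) hBM
      · simpa using hM1
    calc Δt / 2 * ‖((c₁, 1) : (ℝ × ℝ) × ℝ)‖ ≤ Δt / 2 * M := by
          apply mul_le_mul_of_nonneg_left hn1 (by linarith)
      _ ≤ M * Δt := by nlinarith
  have htay : ‖g (z + v) - g z - G z v‖ ≤ B * (M * Δt) * (M * Δt) := by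
    calc ‖g (z + v) - g z - G z v‖ ≤ B * ‖v‖ * ‖v‖ := htaylor z v
      _ ≤ B * (M * Δt) * (M * Δt) := by
          apply mul_le_mul (mul_le_mul_of_nonneg_left hvnorm hB0) hvnorm (norm_nonneg _)
            (by positivity)
  have hfinal : ‖X t - (x - Δt • g (z + v))‖ ≤ 3 * B * M ^ 2 * Δt ^ 3 := by
    rw [hdec]
    calc ‖R t + Δt • (g (z + v) - g z - G z v)‖
        ≤ ‖R t‖ + ‖Δt • (g (z + v) - g z - G z v)‖ := norm_add_le _ _
      _ ≤ (2 * B * M ^ 2) * Δt ^ 3 + Δt * (B * (M * Δt) * (M * Δt)) := by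
          apply add_le_add hRbd
          rw [norm_smul, Real.norm_eq_abs, abs_of_pos hΔt0]
          exact mul_le_mul_of_nonneg_left htay hΔt0.le
      _ = 3 * B * M ^ 2 * Δt ^ 3 := by ring
  rw [← hzv] at hfinal
  exact hfinal
end
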